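/- For odd ℓ ≥ 3, the word 1'·1·2·1'·3'·3·4·3'·5'·5·6·5'·⋯·(ℓ−2)'·(ℓ−2)·(ℓ−1)·(ℓ−2)'·ℓ'·ℓ·1·ℓ'·2'·2·3·2'·4'·4·5·4'·⋯·(ℓ−1)'·(ℓ−1)·ℓ·(ℓ−1)' represents the graph K^△_ℓ. -/

import Mathlib

def Alternate {V : Type*} [DecidableEq V] (x y : V) (w : List V) : Prop :=
  (w.filter fun z => decide (z = x ∨ z = y)).Chain' (· ≠ ·)

/-- `w` represents the graph `G`: every vertex occurs in `w`, and two distinct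
vertices alternate in `w` iff they are adjacent in `G`. -/
def Represents {V : Type*} [DecidableEq V] (G : SimpleGraph V) (w : List V) : Prop :=
  (∀ v : V, v ∈ w) ∧ ∀ x y : V, x ≠ y → (G.Adj x y ↔ Alternate x y w)

def WordRepresentable {V : Type*} [DecidableEq V] (G : SimpleGraph V) : Prop :=
  ∃ w : List V, Represents G w

/-- The graph `K^△_ℓ` (zero-based): a clique on vertices `inl i`, `i : Fin ℓ`,
together with, for each `i : Fin ℓ`, a vertex `inr i` (the vertex `(i+1)'` of
the paper) adjacent exactly to `inl i` and `inl ((i+1) mod ℓ)`. -/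
def KTri (ℓ : ℕ) : SimpleGraph (Fin ℓ ⊕ Fin ℓ) :=
  SimpleGraph.fromRel fun a b =>
    match a, b with
    | .inl i, .inl j => i ≠ j
    | .inl i, .inr j => i.1 = j.1 ∨ i.1 = (j.1 + 1) % ℓ
    | _, _ => False

/-- The block `i' i j i'` used in the explicit word representing `K^△_ℓ`. -/
def triBlock {ℓ : ℕ} (i j : Fin ℓ) : List (Fin ℓ ⊕ Fin ℓ) :=
  [Sum.inr i, Sum.inl i, Sum.inl j, Sum.inr i]

/-- For odd `ℓ = 2m+3`, the word
`1'121' 3'343' ⋯ (ℓ-2)'(ℓ-2)(ℓ-1)(ℓ-2)' ℓ'ℓ1ℓ' 2'232' ⋯ (ℓ-1)'(ℓ-1)ℓ(ℓ-1)'`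
(here written zero-based: paper vertex `i` is `inl (i-1)`, `i'` is
`inr (i-1)`). -/
def triWord (m : ℕ) : List (Fin (2 * m + 3) ⊕ Fin (2 * m + 3)) :=
  ((List.range (m + 1)).flatMap fun t =>
    triBlock ⟨(2 * t) % (2 * m + 3), Nat.mod_lt _ (by omega)⟩
      ⟨(2 * t + 1) % (2 * m + 3), Nat.mod_lt _ (by omega)⟩) ++
  triBlock ⟨2 * m + 2, by omega⟩ ⟨0, by omega⟩ ++
  ((List.range (m + 1)).flatMap fun t =>
    triBlock ⟨(2 * t + 1) % (2 * m + 3), Nat.mod_lt _ (by omega)⟩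
      ⟨(2 * t + 2) % (2 * m + 3), Nat.mod_lt _ (by omega)⟩)

-- ## infrastructure

private def L (m i : ℕ) : Fin (2*m+3) ⊕ Fin (2*m+3) :=
  Sum.inl ⟨i % (2*m+3), Nat.mod_lt _ (by omega)⟩

private def R (m i : ℕ) : Fin (2*m+3) ⊕ Fin (2*m+3) :=
  Sum.inr ⟨i % (2*m+3), Nat.mod_lt _ (by omega)⟩

private lemma L_eq_L {m i j : ℕ} : L m i = L m j ↔ i % (2*m+3) = j % (2*m+3) := by
  simp [L, Fin.ext_iff]

private lemma R_eq_R {m i j : ℕ} : R m i = R m j ↔ i % (2*m+3) = j % (2*m+3) := by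
  simp [R, Fin.ext_iff]

private lemma L_ne_R {m i j : ℕ} : L m i ≠ R m j := by simp [L, R]

private lemma R_ne_L {m i j : ℕ} : R m i ≠ L m j := by simp [L, R]

private lemma triWord_eq (m : ℕ) : triWord m =
    ((List.range (m+1)).flatMap fun t => [R m (2*t), L m (2*t), L m (2*t+1), R m (2*t)]) ++
    [R m (2*m+2), L m (2*m+2), L m 0, R m (2*m+2)] ++
    ((List.range (m+1)).flatMap fun t => [R m (2*t+1), L m (2*t+1), L m (2*t+2), R m (2*t+1)]) := by
  have h1 : (⟨2*m+2, by omega⟩ : Fin (2*m+3)) = ⟨(2*m+2) % (2*m+3), Nat.mod_lt _ (by omega)⟩ := by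
    simp [Fin.ext_iff, Nat.mod_eq_of_lt]
  have h2 : (⟨0, by omega⟩ : Fin (2*m+3)) = ⟨0 % (2*m+3), Nat.mod_lt _ (by omega)⟩ := by
    simp [Fin.ext_iff]
  simp only [triWord, triBlock, h1, h2]
  rfl

private lemma flatMap_support0 {α : Type*} (g : ℕ → List α) (n : ℕ)
    (h : ∀ t, t < n → g t = []) : (List.range n).flatMap g = [] := by
  induction n with
  | zero => rfl
  | succ n ih =>
    rw [List.range_succ, List.flatMap_append, ih (fun t ht => h t (by omega))]
    simp [h n (by omega)]

private lemma flatMap_support1 {α : Type*} (g : ℕ → List α) (n a : ℕ) (ha : a < n)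
    (h : ∀ t, t < n → t ≠ a → g t = []) : (List.range n).flatMap g = g a := by
  induction n with
  | zero => omega
  | succ n ih =>
    rw [List.range_succ, List.flatMap_append]
    rcases Nat.lt_or_ge a n with ha' | ha'
    · rw [ih ha' (fun t ht hta => h t (by omega) hta)]
      simp [h n (by omega) (by omega)]
    · have : a = n := by omega
      subst this
      rw [flatMap_support0 _ _ (fun t ht => h t (by omega) (by omega))]
      simp

private lemma flatMap_support2 {α : Type*} (g : ℕ → List α) (n a b : ℕ) (hab : a < b)
    (hb : b < n) (h : ∀ t, t < n → t ≠ a → t ≠ b → g t = []) :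
    (List.range n).flatMap g = g a ++ g b := by
  induction n with
  | zero => omega
  | succ n ih =>
    rw [List.range_succ, List.flatMap_append]
    rcases Nat.lt_or_ge b n with hb' | hb'
    · rw [ih hb' (fun t ht h1 h2 => h t (by omega) h1 h2)]
      simp [h n (by omega) (by omega) (by omega)]
    · have : b = n := by omega
      subst this
      rw [flatMap_support1 _ _ a hab (fun t ht hta => h t (by omega) hta (by omega))]
      simp

private def pp {α : Type*} [DecidableEq α] (x y : α) : α → Bool :=
  fun z => decide (z = x ∨ z = y)

private lemma alternate_iff {α : Type*} [DecidableEq α] (x y : α) (w : List α) :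
    Alternate x y w ↔ (w.filter (pp x y)).Chain' (· ≠ ·) := Iff.rfl

private lemma filter_block {α : Type*} [DecidableEq α] (x y : α) (r a b : α) :
    List.filter (pp x y) [r, a, b, r] =
      (if r = x ∨ r = y then [r] else []) ++ (if a = x ∨ a = y then [a] else []) ++
      (if b = x ∨ b = y then [b] else []) ++ (if r = x ∨ r = y then [r] else []) := by
  simp only [pp, List.filter_cons, List.filter_nil, decide_eq_true_eq]
  split_ifs <;> simp

private lemma block_LL {m u v r a b : ℕ} (ha : a < 2*m+3) (hb : b < 2*m+3)
    (hu : u < 2*m+3) (hv : v < 2*m+3) :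
    List.filter (pp (L m u) (L m v)) [R m r, L m a, L m b, R m r] =
      (if a = u then [L m u] else if a = v then [L m v] else []) ++
      (if b = u then [L m u] else if b = v then [L m v] else []) := by
  rw [filter_block]
  have h1 : ¬(R m r = L m u ∨ R m r = L m v) := by simp [R, L]
  have h2 : (L m a = L m u ∨ L m a = L m v) ↔ (a = u ∨ a = v) := by
    simp [L_eq_L, Nat.mod_eq_of_lt ha, Nat.mod_eq_of_lt hu, Nat.mod_eq_of_lt hv]
  have h3 : (L m b = L m u ∨ L m b = L m v) ↔ (b = u ∨ b = v) := by
    simp [L_eq_L, Nat.mod_eq_of_lt hb, Nat.mod_eq_of_lt hu, Nat.mod_eq_of_lt hv]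
  rw [if_neg h1]
  simp only [h2, h3, List.nil_append, List.append_nil]
  split_ifs <;> simp_all

private lemma block_RR {m u v r a b : ℕ} (hr : r < 2*m+3)
    (hu : u < 2*m+3) (hv : v < 2*m+3) :
    List.filter (pp (R m u) (R m v)) [R m r, L m a, L m b, R m r] =
      (if r = u then [R m u, R m u] else if r = v then [R m v, R m v] else []) := by
  rw [filter_block]
  have h2 : ¬(L m a = R m u ∨ L m a = R m v) := by simp [R, L]
  have h3 : ¬(L m b = R m u ∨ L m b = R m v) := by simp [R, L]
  have h1 : (R m r = R m u ∨ R m r = R m v) ↔ (r = u ∨ r = v) := by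
    simp [R_eq_R, Nat.mod_eq_of_lt hr, Nat.mod_eq_of_lt hu, Nat.mod_eq_of_lt hv]
  rw [if_neg h2, if_neg h3]
  simp only [h1, List.nil_append, List.append_nil]
  split_ifs <;> simp_all

private lemma block_LR {m u v r a b : ℕ} (hr : r < 2*m+3) (ha : a < 2*m+3) (hb : b < 2*m+3)
    (hu : u < 2*m+3) (hv : v < 2*m+3) :
    List.filter (pp (L m u) (R m v)) [R m r, L m a, L m b, R m r] =
      (if r = v then [R m v] else []) ++ (if a = u then [L m u] else []) ++
      (if b = u then [L m u] else []) ++ (if r = v then [R m v] else []) := by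
  rw [filter_block]
  have h1 : (R m r = L m u ∨ R m r = R m v) ↔ (r = v) := by
    simp [R, L, Fin.ext_iff, Nat.mod_eq_of_lt hr, Nat.mod_eq_of_lt hv]
  have h2 : (L m a = L m u ∨ L m a = R m v) ↔ (a = u) := by
    simp [R, L, Fin.ext_iff, Nat.mod_eq_of_lt ha, Nat.mod_eq_of_lt hu]
  have h3 : (L m b = L m u ∨ L m b = R m v) ↔ (b = u) := by
    simp [R, L, Fin.ext_iff, Nat.mod_eq_of_lt hb, Nat.mod_eq_of_lt hu]
  simp only [h1, h2, h3]
  split_ifs <;> simp_all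

private lemma partA_LL {m u v : ℕ} (huv : u < v) (hv : v < 2*m+3) :
    List.filter (pp (L m u) (L m v))
      ((List.range (m+1)).flatMap fun t => [R m (2*t), L m (2*t), L m (2*t+1), R m (2*t)]) =
      if v = 2*m+2 then [L m u] else [L m u, L m v] := by
  rw [List.filter_flatMap]
  by_cases hv2 : v = 2*m+2
  · rw [if_pos hv2, flatMap_support1 _ _ (u/2) (by omega) ?_]
    · rw [block_LL (by omega) (by omega) (by omega) (by omega)]
      split_ifs <;> first | rfl | (exfalso; omega)
    · intro t ht htn
      rw [block_LL (by omega) (by omega) (by omega) (by omega)]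
      split_ifs <;> first | rfl | (exfalso; omega)
  · rw [if_neg hv2]
    by_cases heq : u/2 = v/2
    · rw [flatMap_support1 _ _ (u/2) (by omega) ?_]
      · rw [block_LL (by omega) (by omega) (by omega) (by omega)]
        split_ifs <;> first | rfl | (exfalso; omega)
      · intro t ht htn
        rw [block_LL (by omega) (by omega) (by omega) (by omega)]
        split_ifs <;> first | rfl | (exfalso; omega)
    · rw [flatMap_support2 _ _ (u/2) (v/2) (by omega) (by omega) ?_]
      · rw [block_LL (by omega) (by omega) (by omega) (by omega),
          block_LL (by omega) (by omega) (by omega) (by omega)]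
        split_ifs <;> first | rfl | (exfalso; omega)
      · intro t ht ht1 ht2
        rw [block_LL (by omega) (by omega) (by omega) (by omega)]
        split_ifs <;> first | rfl | (exfalso; omega)

private lemma partC_LL {m u v : ℕ} (huv : u < v) (hv : v < 2*m+3) :
    List.filter (pp (L m u) (L m v))
      ((List.range (m+1)).flatMap fun t => [R m (2*t+1), L m (2*t+1), L m (2*t+2), R m (2*t+1)]) =
      if u = 0 then [L m v] else [L m u, L m v] := by
  rw [List.filter_flatMap]
  by_cases hu0 : u = 0
  · rw [if_pos hu0, flatMap_support1 _ _ ((v-1)/2) (by omega) ?_]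
    · rw [block_LL (by omega) (by omega) (by omega) (by omega)]
      split_ifs <;> first | rfl | (exfalso; omega)
    · intro t ht htn
      rw [block_LL (by omega) (by omega) (by omega) (by omega)]
      split_ifs <;> first | rfl | (exfalso; omega)
  · rw [if_neg hu0]
    by_cases heq : (u-1)/2 = (v-1)/2
    · rw [flatMap_support1 _ _ ((u-1)/2) (by omega) ?_]
      · rw [block_LL (by omega) (by omega) (by omega) (by omega)]
        split_ifs <;> first | rfl | (exfalso; omega)
      · intro t ht htn
        rw [block_LL (by omega) (by omega) (by omega) (by omega)]
        split_ifs <;> first | rfl | (exfalso; omega)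
    · rw [flatMap_support2 _ _ ((u-1)/2) ((v-1)/2) (by omega) (by omega) ?_]
      · rw [block_LL (by omega) (by omega) (by omega) (by omega),
          block_LL (by omega) (by omega) (by omega) (by omega)]
        split_ifs <;> first | rfl | (exfalso; omega)
      · intro t ht ht1 ht2
        rw [block_LL (by omega) (by omega) (by omega) (by omega)]
        split_ifs <;> first | rfl | (exfalso; omega)

private lemma filter_LL {m u v : ℕ} (huv : u < v) (hv : v < 2*m+3) :
    List.filter (pp (L m u) (L m v)) (triWord m) = [L m u, L m v, L m u, L m v] := by
  rw [triWord_eq, List.filter_append, List.filter_append, partA_LL huv hv, partC_LL huv hv,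
    block_LL (by omega) (by omega) (by omega) (by omega)]
  split_ifs <;> first | rfl | (exfalso; omega)

private lemma partA_RR {m u v : ℕ} (huv : u < v) (hv : v < 2*m+3) :
    List.filter (pp (R m u) (R m v))
      ((List.range (m+1)).flatMap fun t => [R m (2*t), L m (2*t), L m (2*t+1), R m (2*t)]) =
      (if u % 2 = 0 ∧ u ≤ 2*m then [R m u, R m u] else []) ++
      (if v % 2 = 0 ∧ v ≤ 2*m then [R m v, R m v] else []) := by
  rw [List.filter_flatMap]
  by_cases hu0 : u % 2 = 0 ∧ u ≤ 2*m <;> by_cases hv0 : v % 2 = 0 ∧ v ≤ 2*m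
  · rw [flatMap_support2 _ _ (u/2) (v/2) (by omega) (by omega) ?_]
    · rw [block_RR (by omega) (by omega) (by omega), block_RR (by omega) (by omega) (by omega)]
      split_ifs <;> first | rfl | (exfalso; omega)
    · intro t ht ht1 ht2
      rw [block_RR (by omega) (by omega) (by omega)]
      split_ifs <;> first | rfl | (exfalso; omega)
  · rw [flatMap_support1 _ _ (u/2) (by omega) ?_]
    · rw [block_RR (by omega) (by omega) (by omega)]
      split_ifs <;> first | rfl | (exfalso; omega)
    · intro t ht htn
      rw [block_RR (by omega) (by omega) (by omega)]
      split_ifs <;> first | rfl | (exfalso; omega)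
  · rw [flatMap_support1 _ _ (v/2) (by omega) ?_]
    · rw [block_RR (by omega) (by omega) (by omega)]
      split_ifs <;> first | rfl | (exfalso; omega)
    · intro t ht htn
      rw [block_RR (by omega) (by omega) (by omega)]
      split_ifs <;> first | rfl | (exfalso; omega)
  · rw [flatMap_support0 _ _ ?_]
    · split_ifs <;> first | rfl | (exfalso; omega)
    · intro t ht
      rw [block_RR (by omega) (by omega) (by omega)]
      split_ifs <;> first | rfl | (exfalso; omega)

private lemma partC_RR {m u v : ℕ} (huv : u < v) (hv : v < 2*m+3) :
    List.filter (pp (R m u) (R m v))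
      ((List.range (m+1)).flatMap fun t => [R m (2*t+1), L m (2*t+1), L m (2*t+2), R m (2*t+1)]) =
      (if u % 2 = 1 then [R m u, R m u] else []) ++
      (if v % 2 = 1 then [R m v, R m v] else []) := by
  rw [List.filter_flatMap]
  by_cases hu0 : u % 2 = 1 <;> by_cases hv0 : v % 2 = 1
  · rw [flatMap_support2 _ _ ((u-1)/2) ((v-1)/2) (by omega) (by omega) ?_]
    · rw [block_RR (by omega) (by omega) (by omega), block_RR (by omega) (by omega) (by omega)]
      split_ifs <;> first | rfl | (exfalso; omega)
    · intro t ht ht1 ht2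
      rw [block_RR (by omega) (by omega) (by omega)]
      split_ifs <;> first | rfl | (exfalso; omega)
  · rw [flatMap_support1 _ _ ((u-1)/2) (by omega) ?_]
    · rw [block_RR (by omega) (by omega) (by omega)]
      split_ifs <;> first | rfl | (exfalso; omega)
    · intro t ht htn
      rw [block_RR (by omega) (by omega) (by omega)]
      split_ifs <;> first | rfl | (exfalso; omega)
  · rw [flatMap_support1 _ _ ((v-1)/2) (by omega) ?_]
    · rw [block_RR (by omega) (by omega) (by omega)]
      split_ifs <;> first | rfl | (exfalso; omega)
    · intro t ht htn
      rw [block_RR (by omega) (by omega) (by omega)]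
      split_ifs <;> first | rfl | (exfalso; omega)
  · rw [flatMap_support0 _ _ ?_]
    · split_ifs <;> first | rfl | (exfalso; omega)
    · intro t ht
      rw [block_RR (by omega) (by omega) (by omega)]
      split_ifs <;> first | rfl | (exfalso; omega)

private lemma filter_RR {m u v : ℕ} (huv : u < v) (hv : v < 2*m+3) :
    ∃ a b : ℕ, List.filter (pp (R m u) (R m v)) (triWord m) =
      [R m a, R m a, R m b, R m b] := by
  rw [triWord_eq, List.filter_append, List.filter_append, partA_RR huv hv, partC_RR huv hv,
    block_RR (by omega) (by omega) (by omega)]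
  split_ifs <;> first | exact ⟨u, v, rfl⟩ | exact ⟨v, u, rfl⟩ | (exfalso; omega)

private lemma partA_LR {m u v : ℕ} (hu : u < 2*m+3) (hv : v < 2*m+3) :
    List.filter (pp (L m u) (R m v))
      ((List.range (m+1)).flatMap fun t => [R m (2*t), L m (2*t), L m (2*t+1), R m (2*t)]) =
      if v % 2 = 0 ∧ v ≤ 2*m then
        (if u = v ∨ u = v + 1 then [R m v, L m u, R m v]
         else if u = 2*m+2 then [R m v, R m v]
         else if u/2 < v/2 then [L m u, R m v, R m v]
         else [R m v, R m v, L m u])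
      else if u ≤ 2*m+1 then [L m u] else [] := by
  rw [List.filter_flatMap]
  by_cases hveven : v % 2 = 0 ∧ v ≤ 2*m
  · rw [if_pos hveven]
    by_cases huv1 : u = v ∨ u = v + 1
    · rw [if_pos huv1, flatMap_support1 _ _ (v/2) (by omega) ?_]
      · rw [block_LR (by omega) (by omega) (by omega) (by omega) (by omega)]
        split_ifs <;> first | rfl | (exfalso; omega)
      · intro t ht htn
        rw [block_LR (by omega) (by omega) (by omega) (by omega) (by omega)]
        split_ifs <;> first | rfl | (exfalso; omega)
    · rw [if_neg huv1]
      by_cases hu2 : u = 2*m+2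
      · rw [if_pos hu2, flatMap_support1 _ _ (v/2) (by omega) ?_]
        · rw [block_LR (by omega) (by omega) (by omega) (by omega) (by omega)]
          split_ifs <;> first | rfl | (exfalso; omega)
        · intro t ht htn
          rw [block_LR (by omega) (by omega) (by omega) (by omega) (by omega)]
          split_ifs <;> first | rfl | (exfalso; omega)
      · rw [if_neg hu2]
        by_cases ho : u/2 < v/2
        · rw [if_pos ho, flatMap_support2 _ _ (u/2) (v/2) (by omega) (by omega) ?_]
          · rw [block_LR (by omega) (by omega) (by omega) (by omega) (by omega),
              block_LR (by omega) (by omega) (by omega) (by omega) (by omega)]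
            split_ifs <;> first | rfl | (exfalso; omega)
          · intro t ht ht1 ht2
            rw [block_LR (by omega) (by omega) (by omega) (by omega) (by omega)]
            split_ifs <;> first | rfl | (exfalso; omega)
        · rw [if_neg ho, flatMap_support2 _ _ (v/2) (u/2) (by omega) (by omega) ?_]
          · rw [block_LR (by omega) (by omega) (by omega) (by omega) (by omega),
              block_LR (by omega) (by omega) (by omega) (by omega) (by omega)]
            split_ifs <;> first | rfl | (exfalso; omega)
          · intro t ht ht1 ht2
            rw [block_LR (by omega) (by omega) (by omega) (by omega) (by omega)]
            split_ifs <;> first | rfl | (exfalso; omega)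
  · rw [if_neg hveven]
    by_cases hu1 : u ≤ 2*m+1
    · rw [if_pos hu1, flatMap_support1 _ _ (u/2) (by omega) ?_]
      · rw [block_LR (by omega) (by omega) (by omega) (by omega) (by omega)]
        split_ifs <;> first | rfl | (exfalso; omega)
      · intro t ht htn
        rw [block_LR (by omega) (by omega) (by omega) (by omega) (by omega)]
        split_ifs <;> first | rfl | (exfalso; omega)
    · rw [if_neg hu1, flatMap_support0 _ _ ?_]
      intro t ht
      rw [block_LR (by omega) (by omega) (by omega) (by omega) (by omega)]
      split_ifs <;> first | rfl | (exfalso; omega)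

private lemma partC_LR {m u v : ℕ} (hu : u < 2*m+3) (hv : v < 2*m+3) :
    List.filter (pp (L m u) (R m v))
      ((List.range (m+1)).flatMap fun t => [R m (2*t+1), L m (2*t+1), L m (2*t+2), R m (2*t+1)]) =
      if v % 2 = 1 then
        (if u = v ∨ u = v + 1 then [R m v, L m u, R m v]
         else if u = 0 then [R m v, R m v]
         else if (u-1)/2 < (v-1)/2 then [L m u, R m v, R m v]
         else [R m v, R m v, L m u])
      else if 1 ≤ u then [L m u] else [] := by
  rw [List.filter_flatMap]
  by_cases hvodd : v % 2 = 1
  · rw [if_pos hvodd]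
    by_cases huv1 : u = v ∨ u = v + 1
    · rw [if_pos huv1, flatMap_support1 _ _ ((v-1)/2) (by omega) ?_]
      · rw [block_LR (by omega) (by omega) (by omega) (by omega) (by omega)]
        split_ifs <;> first | rfl | (exfalso; omega)
      · intro t ht htn
        rw [block_LR (by omega) (by omega) (by omega) (by omega) (by omega)]
        split_ifs <;> first | rfl | (exfalso; omega)
    · rw [if_neg huv1]
      by_cases hu2 : u = 0
      · rw [if_pos hu2, flatMap_support1 _ _ ((v-1)/2) (by omega) ?_]
        · rw [block_LR (by omega) (by omega) (by omega) (by omega) (by omega)]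
          split_ifs <;> first | rfl | (exfalso; omega)
        · intro t ht htn
          rw [block_LR (by omega) (by omega) (by omega) (by omega) (by omega)]
          split_ifs <;> first | rfl | (exfalso; omega)
      · rw [if_neg hu2]
        by_cases ho : (u-1)/2 < (v-1)/2
        · rw [if_pos ho, flatMap_support2 _ _ ((u-1)/2) ((v-1)/2) (by omega) (by omega) ?_]
          · rw [block_LR (by omega) (by omega) (by omega) (by omega) (by omega),
              block_LR (by omega) (by omega) (by omega) (by omega) (by omega)]
            split_ifs <;> first | rfl | (exfalso; omega)
          · intro t ht ht1 ht2
            rw [block_LR (by omega) (by omega) (by omega) (by omega) (by omega)]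
            split_ifs <;> first | rfl | (exfalso; omega)
        · rw [if_neg ho, flatMap_support2 _ _ ((v-1)/2) ((u-1)/2) (by omega) (by omega) ?_]
          · rw [block_LR (by omega) (by omega) (by omega) (by omega) (by omega),
              block_LR (by omega) (by omega) (by omega) (by omega) (by omega)]
            split_ifs <;> first | rfl | (exfalso; omega)
          · intro t ht ht1 ht2
            rw [block_LR (by omega) (by omega) (by omega) (by omega) (by omega)]
            split_ifs <;> first | rfl | (exfalso; omega)
  · rw [if_neg hvodd]
    by_cases hu1 : 1 ≤ u
    · rw [if_pos hu1, flatMap_support1 _ _ ((u-1)/2) (by omega) ?_]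
      · rw [block_LR (by omega) (by omega) (by omega) (by omega) (by omega)]
        split_ifs <;> first | rfl | (exfalso; omega)
      · intro t ht htn
        rw [block_LR (by omega) (by omega) (by omega) (by omega) (by omega)]
        split_ifs <;> first | rfl | (exfalso; omega)
    · rw [if_neg hu1, flatMap_support0 _ _ ?_]
      intro t ht
      rw [block_LR (by omega) (by omega) (by omega) (by omega) (by omega)]
      split_ifs <;> first | rfl | (exfalso; omega)

set_option maxHeartbeats 2000000 in
private lemma alt_LR {m u v : ℕ} (hu : u < 2*m+3) (hv : v < 2*m+3) :
    Alternate (L m u) (R m v) (triWord m) ↔ (u = v ∨ u = (v+1) % (2*m+3)) := by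
  have hmod : (v+1) % (2*m+3) = if v = 2*m+2 then 0 else v + 1 := by
    split_ifs with h
    · rw [show v + 1 = 2*m+3 by omega, Nat.mod_self]
    · exact Nat.mod_eq_of_lt (by omega)
  rw [alternate_iff, hmod, triWord_eq, List.filter_append, List.filter_append,
    partA_LR hu hv, partC_LR hu hv,
    block_LR (by omega) (by omega) (by omega) (by omega) (by omega)]
  split_ifs <;>
    first
      | (exfalso; omega)
      | (simp [List.Chain', List.isChain_cons_cons, L_ne_R, R_ne_L]; try omega)

private lemma alternate_comm {α : Type*} [DecidableEq α] (x y : α) (w : List α) :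
    Alternate x y w ↔ Alternate y x w := by
  unfold Alternate
  have h : (fun z => decide (z = x ∨ z = y)) = (fun z => decide (z = y ∨ z = x)) := by
    funext z
    simp [or_comm]
  rw [h]

private lemma mem_triWord {m : ℕ} (z : Fin (2*m+3) ⊕ Fin (2*m+3)) : z ∈ triWord m := by
  rw [triWord_eq]
  simp only [List.mem_append, List.mem_flatMap, List.mem_range]
  rcases z with i | i
  · have hi : i.1 < 2*m+3 := i.isLt
    have hz : Sum.inl i = L m i.1 := by
      simp [L, Fin.ext_iff, Nat.mod_eq_of_lt hi]
    rw [hz]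
    by_cases h : i.1 ≤ 2*m+1
    · by_cases he : i.1 % 2 = 0
      · refine Or.inl (Or.inl ⟨i.1/2, by omega, ?_⟩)
        rw [show 2*(i.1/2) = i.1 by omega]
        simp
      · refine Or.inl (Or.inl ⟨i.1/2, by omega, ?_⟩)
        rw [show 2*(i.1/2)+1 = i.1 by omega]
        simp
    · refine Or.inl (Or.inr ?_)
      rw [show 2*m+2 = i.1 by omega]
      simp
  · have hi : i.1 < 2*m+3 := i.isLt
    have hz : Sum.inr i = R m i.1 := by
      simp [R, Fin.ext_iff, Nat.mod_eq_of_lt hi]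
    rw [hz]
    by_cases h : i.1 % 2 = 0
    · by_cases h2 : i.1 ≤ 2*m
      · refine Or.inl (Or.inl ⟨i.1/2, by omega, ?_⟩)
        rw [show 2*(i.1/2) = i.1 by omega]
        simp
      · refine Or.inl (Or.inr ?_)
        rw [show 2*m+2 = i.1 by omega]
        simp
    · refine Or.inr ⟨(i.1-1)/2, by omega, ?_⟩
      rw [show 2*((i.1-1)/2)+1 = i.1 by omega]
      simp

private lemma inl_eq_L {m : ℕ} (i : Fin (2*m+3)) : Sum.inl i = L m i.1 := by
  simp [L, Fin.ext_iff, Nat.mod_eq_of_lt i.isLt]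

private lemma inr_eq_R {m : ℕ} (i : Fin (2*m+3)) : Sum.inr i = R m i.1 := by
  simp [R, Fin.ext_iff, Nat.mod_eq_of_lt i.isLt]

private lemma main_LR {m : ℕ} (i j : Fin (2*m+3)) :
    (KTri (2*m+3)).Adj (Sum.inl i) (Sum.inr j) ↔
      Alternate (Sum.inl i) (Sum.inr j) (triWord m) := by
  have hadj : (KTri (2*m+3)).Adj (Sum.inl i) (Sum.inr j) ↔
      (i.1 = j.1 ∨ i.1 = (j.1+1) % (2*m+3)) := by
    simp [KTri, SimpleGraph.fromRel_adj]
  rw [hadj, inl_eq_L, inr_eq_R, alt_LR i.isLt j.isLt]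


/-- For every odd `ℓ = 2m+3 ≥ 3`, the explicit word `triWord m` represents the
graph `K^△_ℓ`. -/
theorem triWord_represents (m : ℕ) :
    Represents (KTri (2 * m + 3)) (triWord m) := by
  constructor
  · exact fun z => mem_triWord z
  · intro x y hxy
    rcases x with i | i <;> rcases y with j | j
    · -- inl inl
      have hij : i ≠ j := fun h => hxy (by rw [h])
      have hval : i.1 ≠ j.1 := fun h => hij (Fin.ext h)
      have hadj : (KTri (2*m+3)).Adj (Sum.inl i) (Sum.inl j) := by
        simp [KTri, SimpleGraph.fromRel_adj, hij]
      refine ⟨fun _ => ?_, fun _ => hadj⟩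
      have halt : ∀ u v : ℕ, u < v → (hv : v < 2*m+3) →
          Alternate (L m u) (L m v) (triWord m) := by
        intro u v huv hv
        rw [alternate_iff, filter_LL huv hv]
        have hne : L m u ≠ L m v := by
          rw [Ne, L_eq_L, Nat.mod_eq_of_lt (show u < 2*m+3 by omega), Nat.mod_eq_of_lt hv]
          omega
        simp [List.Chain', List.isChain_cons_cons, hne, hne.symm]
      rw [inl_eq_L, inl_eq_L]
      rcases Nat.lt_or_ge i.1 j.1 with h | h
      · exact halt _ _ h j.isLt
      · rw [alternate_comm]
        exact halt _ _ (by omega) i.isLt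
    · -- inl inr
      exact main_LR i j
    · -- inr inl
      rw [(KTri (2*m+3)).adj_comm, alternate_comm]
      exact main_LR j i
    · -- inr inr
      have hadj : ¬ (KTri (2*m+3)).Adj (Sum.inr i) (Sum.inr j) := by
        simp [KTri, SimpleGraph.fromRel_adj]
      have hval : i.1 ≠ j.1 := by
        intro h
        exact hxy (by rw [Fin.ext h])
      have hna : ∀ u v : ℕ, u < v → (hv : v < 2*m+3) →
          ¬ Alternate (R m u) (R m v) (triWord m) := by
        intro u v huv hv halt
        obtain ⟨a, b, heq⟩ := filter_RR huv hv
        rw [alternate_iff, heq] at halt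
        exact (List.isChain_cons_cons.mp halt).1 rfl
      constructor
      · intro h
        exact absurd h hadj
      · intro h
        exfalso
        rw [inr_eq_R, inr_eq_R] at h
        rcases Nat.lt_or_ge i.1 j.1 with hlt | hge
        · exact hna _ _ hlt j.isLt h
        · rw [alternate_comm] at h
          exact hna _ _ (by omega) i.isLt h
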